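/- Softmax PG lower bound with exact gradients: let η ∈ (0,1] and define θ_{t+1} := θ_t + η·d(π_{θ_t}ᵀ r)/dθ_t for all t ≥ 1 from an arbitrary θ_1 ∈ ℝ^K. If the sub-optimality converges to zero, i.e. (π* − π_{θ_t})ᵀ r → 0 as t → ∞, then there exists T ≥ 1 such that for all t ≥ T, (π* − π_{θ_t})ᵀ r ≥ Δ²/(6·t). -/

import Mathlib

open Finset Real Filter

/-- Softmax policy: `π_θ(a) = exp(θ(a)) / Σ_{a'} exp(θ(a'))`. -/
noncomputable def softmax {K : ℕ} (θ : Fin K → ℝ) (a : Fin K) : ℝ :=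
  Real.exp (θ a) / ∑ a', Real.exp (θ a')

/-- Expected reward `π_θᵀ r`. -/
noncomputable def expReward {K : ℕ} (r θ : Fin K → ℝ) : ℝ :=
  ∑ a, softmax θ a * r a

/-- Policy gradient component `(d π_θᵀ r / dθ)(a) = π_θ(a)·(r(a) − π_θᵀ r)`. -/
noncomputable def pgrad {K : ℕ} (r θ : Fin K → ℝ) (a : Fin K) : ℝ :=
  softmax θ a * (r a - expReward r θ)

section basic
variable {K : ℕ} (hK : 2 ≤ K)

lemma sum_exp_pos (hK : 2 ≤ K) (θ : Fin K → ℝ) : 0 < ∑ a, Real.exp (θ a) := by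
  apply Finset.sum_pos (fun a _ => Real.exp_pos _)
  exact ⟨⟨0, by omega⟩, Finset.mem_univ _⟩

lemma softmax_pos (hK : 2 ≤ K) (θ : Fin K → ℝ) (a : Fin K) : 0 < softmax θ a :=
  div_pos (Real.exp_pos _) (sum_exp_pos hK θ)

lemma softmax_sum (hK : 2 ≤ K) (θ : Fin K → ℝ) : ∑ a, softmax θ a = 1 := by
  unfold softmax
  rw [← Finset.sum_div]
  exact div_self (ne_of_gt (sum_exp_pos hK θ))

lemma softmax_le_one (hK : 2 ≤ K) (θ : Fin K → ℝ) (a : Fin K) : softmax θ a ≤ 1 := by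
  have h := softmax_sum hK θ
  have : softmax θ a ≤ ∑ a', softmax θ a' :=
    Finset.single_le_sum (fun b _ => le_of_lt (softmax_pos hK θ b)) (Finset.mem_univ a)
  linarith

variable (r : Fin K → ℝ) (hr : ∀ a, 0 < r a ∧ r a ≤ 1)

lemma expReward_pos (hK : 2 ≤ K) (hr : ∀ a, 0 < r a ∧ r a ≤ 1) (θ : Fin K → ℝ) :
    0 < expReward r θ := by
  apply Finset.sum_pos (fun a _ => mul_pos (softmax_pos hK θ a) (hr a).1)
  exact ⟨⟨0, by omega⟩, Finset.mem_univ _⟩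

lemma expReward_le_one (hK : 2 ≤ K) (hr : ∀ a, 0 < r a ∧ r a ≤ 1) (θ : Fin K → ℝ) :
    expReward r θ ≤ 1 := by
  have : expReward r θ ≤ ∑ a, softmax θ a :=
    Finset.sum_le_sum (fun a _ => by
      nlinarith [(hr a).1, (hr a).2, softmax_pos hK θ a])
  rw [softmax_sum hK θ] at this
  exact this

lemma subopt_eq (hK : 2 ≤ K) (θ : Fin K → ℝ) (astar : Fin K) :
    r astar - expReward r θ = ∑ a, softmax θ a * (r astar - r a) := by
  unfold expReward
  rw [Finset.sum_congr rfl (fun a _ => mul_sub (softmax θ a) (r astar) (r a)),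
    Finset.sum_sub_distrib, ← Finset.sum_mul, softmax_sum hK θ, one_mul]

end basic

section delta
variable {K : ℕ}

lemma delta_facts (hK : 2 ≤ K) (r : Fin K → ℝ) (hr : ∀ a, 0 < r a ∧ r a ≤ 1)
    (astar : Fin K) (hstar : ∀ a, a ≠ astar → r a < r astar)
    (Δ : ℝ) (hΔ : Δ = r astar - sSup (r '' {a | a ≠ astar})) :
    0 < Δ ∧ Δ ≤ 1 ∧ ∀ a, a ≠ astar → Δ ≤ r astar - r a := by
  have hne : ∃ b : Fin K, b ≠ astar := by
    by_cases h : astar = ⟨0, by omega⟩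
    · exact ⟨⟨1, by omega⟩, by rw [h]; simp [Fin.ext_iff]⟩
    · exact ⟨⟨0, by omega⟩, fun hc => h hc.symm⟩
  obtain ⟨b, hb⟩ := hne
  have hSne : (r '' {a | a ≠ astar}).Nonempty := ⟨r b, b, hb, rfl⟩
  have hfin : (r '' {a | a ≠ astar}).Finite := Set.Finite.image r (Set.toFinite _)
  have hmem : sSup (r '' {a | a ≠ astar}) ∈ r '' {a | a ≠ astar} :=
    Set.Nonempty.csSup_mem hSne hfin
  obtain ⟨c, hc, hceq⟩ := hmem
  have hle : ∀ a, a ≠ astar → r a ≤ sSup (r '' {a | a ≠ astar}) := by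
    intro a ha
    exact le_csSup (Set.Finite.bddAbove hfin) ⟨a, ha, rfl⟩
  refine ⟨by rw [hΔ, ← hceq]; linarith [hstar c hc], ?_, ?_⟩
  · rw [hΔ, ← hceq]; linarith [(hr c).1, (hr astar).2]
  · intro a ha; rw [hΔ]; linarith [hle a ha]

lemma subopt_pos (hK : 2 ≤ K) (r : Fin K → ℝ) (hr : ∀ a, 0 < r a ∧ r a ≤ 1)
    (astar : Fin K) (hstar : ∀ a, a ≠ astar → r a < r astar) (θ : Fin K → ℝ) :
    0 < r astar - expReward r θ := by
  have hne : ∃ b : Fin K, b ≠ astar := by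
    by_cases h : astar = ⟨0, by omega⟩
    · exact ⟨⟨1, by omega⟩, by rw [h]; simp [Fin.ext_iff]⟩
    · exact ⟨⟨0, by omega⟩, fun hc => h hc.symm⟩
  obtain ⟨b, hb⟩ := hne
  rw [subopt_eq r hK θ astar]
  refine Finset.sum_pos' (fun a _ => ?_) ⟨b, Finset.mem_univ b, ?_⟩
  · rcases eq_or_ne a astar with h | h
    · simp [h]
    · exact le_of_lt (mul_pos (softmax_pos hK θ a) (by linarith [hstar a h]))
  · exact mul_pos (softmax_pos hK θ b) (by linarith [hstar b hb])

lemma one_sub_pi_le (hK : 2 ≤ K) (r : Fin K → ℝ)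
    (astar : Fin K) (Δ : ℝ) (hgap : ∀ a, a ≠ astar → Δ ≤ r astar - r a)
    (hΔ0 : 0 < Δ) (θ : Fin K → ℝ) :
    (1 - softmax θ astar) * Δ ≤ r astar - expReward r θ := by
  rw [subopt_eq r hK θ astar]
  have h1 : (1 - softmax θ astar) = ∑ a ∈ Finset.univ.erase astar, softmax θ a := by
    rw [Finset.sum_erase_eq_sub (Finset.mem_univ astar), softmax_sum hK θ]
  rw [h1, Finset.sum_mul]
  rw [← Finset.sum_erase_add _ _ (Finset.mem_univ astar)]
  have h2 : softmax θ astar * (r astar - r astar) = 0 := by ring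
  rw [h2, add_zero]
  apply Finset.sum_le_sum
  intro a ha
  have := hgap a (Finset.ne_of_mem_erase ha)
  nlinarith [softmax_pos hK θ a]

lemma grad_sq_le (hK : 2 ≤ K) (r : Fin K → ℝ) (hr : ∀ a, 0 < r a ∧ r a ≤ 1)
    (astar : Fin K) (Δ : ℝ) (hgap : ∀ a, a ≠ astar → Δ ≤ r astar - r a)
    (hΔ0 : 0 < Δ) (hΔ1 : Δ ≤ 1) (θ : Fin K → ℝ) :
    (∑ a, pgrad r θ a ^ 2) * Δ ^ 2 ≤ 2 * (r astar - expReward r θ) ^ 2 := by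
  have hf0 : 0 < expReward r θ := expReward_pos r hK hr θ
  have hf1 : expReward r θ ≤ 1 := expReward_le_one r hK hr θ
  have habs : ∀ a, (r a - expReward r θ) ^ 2 ≤ 1 := by
    intro a; nlinarith [(hr a).1, (hr a).2]
  have hπδ : (1 - softmax θ astar) * Δ ≤ r astar - expReward r θ :=
    one_sub_pi_le hK r astar Δ hgap hΔ0 θ
  have hπ1 : softmax θ astar ≤ 1 := softmax_le_one hK θ astar
  have hπ0 : 0 < softmax θ astar := softmax_pos hK θ astar
  have hδ0 : 0 ≤ r astar - expReward r θ := by nlinarith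
  rw [← Finset.sum_erase_add _ _ (Finset.mem_univ astar)]
  have hrest : ∑ a ∈ Finset.univ.erase astar, pgrad r θ a ^ 2
      ≤ (1 - softmax θ astar) ^ 2 := by
    have h1 : ∑ a ∈ Finset.univ.erase astar, pgrad r θ a ^ 2
        ≤ ∑ a ∈ Finset.univ.erase astar, softmax θ a ^ 2 := by
      apply Finset.sum_le_sum
      intro a _
      unfold pgrad
      rw [mul_pow]
      nlinarith [habs a, sq_nonneg (softmax θ a)]
    have h2 : ∑ a ∈ Finset.univ.erase astar, softmax θ a ^ 2
        ≤ (∑ a ∈ Finset.univ.erase astar, softmax θ a) ^ 2 := by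
      apply Finset.sum_sq_le_sq_sum_of_nonneg
      intro a _; exact le_of_lt (softmax_pos hK θ a)
    have h3 : (∑ a ∈ Finset.univ.erase astar, softmax θ a) = 1 - softmax θ astar := by
      rw [Finset.sum_erase_eq_sub (Finset.mem_univ astar), softmax_sum hK θ]
    rw [h3] at h2
    linarith
  have hstarterm : pgrad r θ astar ^ 2 ≤ (r astar - expReward r θ) ^ 2 := by
    unfold pgrad
    rw [mul_pow]
    have hπsq : softmax θ astar ^ 2 ≤ 1 := by nlinarith
    nlinarith [mul_le_mul_of_nonneg_right hπsq (sq_nonneg (r astar - expReward r θ))]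
  have key1 : (1 - softmax θ astar) ^ 2 * Δ ^ 2 ≤ (r astar - expReward r θ) ^ 2 := by
    have h0 : 0 ≤ (1 - softmax θ astar) * Δ := mul_nonneg (by linarith) (le_of_lt hΔ0)
    nlinarith [mul_self_le_mul_self h0 hπδ]
  have key2 : pgrad r θ astar ^ 2 * Δ ^ 2 ≤ (r astar - expReward r θ) ^ 2 := by
    have hΔsq : Δ ^ 2 ≤ 1 := by nlinarith
    nlinarith [mul_le_mul_of_nonneg_right hstarterm (sq_nonneg Δ),
      mul_le_mul_of_nonneg_left hΔsq (sq_nonneg (r astar - expReward r θ))]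
  nlinarith [mul_le_mul_of_nonneg_right hrest (sq_nonneg Δ)]

end delta

namespace SPG

noncomputable def Ef {K : ℕ} (θ g : Fin K → ℝ) (s : ℝ) (a : Fin K) : ℝ :=
  Real.exp (θ a + s * g a)
noncomputable def Df {K : ℕ} (θ g : Fin K → ℝ) (s : ℝ) : ℝ := ∑ a, Ef θ g s a
noncomputable def Nf {K : ℕ} (r θ g : Fin K → ℝ) (s : ℝ) : ℝ := ∑ a, Ef θ g s a * r a
noncomputable def D1f {K : ℕ} (θ g : Fin K → ℝ) (s : ℝ) : ℝ := ∑ a, g a * Ef θ g s a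
noncomputable def N1f {K : ℕ} (r θ g : Fin K → ℝ) (s : ℝ) : ℝ := ∑ a, g a * Ef θ g s a * r a
noncomputable def D2f {K : ℕ} (θ g : Fin K → ℝ) (s : ℝ) : ℝ := ∑ a, g a * (g a * Ef θ g s a)
noncomputable def N2f {K : ℕ} (r θ g : Fin K → ℝ) (s : ℝ) : ℝ :=
  ∑ a, g a * (g a * Ef θ g s a) * r a
noncomputable def phif {K : ℕ} (r θ g : Fin K → ℝ) (s : ℝ) : ℝ := Nf r θ g s / Df θ g s
noncomputable def psif {K : ℕ} (r θ g : Fin K → ℝ) (s : ℝ) : ℝ :=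
  (N1f r θ g s * Df θ g s - Nf r θ g s * D1f θ g s) / Df θ g s ^ 2
noncomputable def Qf {K : ℕ} (r θ g : Fin K → ℝ) (s : ℝ) : ℝ :=
  ((N2f r θ g s * Df θ g s - Nf r θ g s * D2f θ g s) * Df θ g s
    - 2 * D1f θ g s * (N1f r θ g s * Df θ g s - Nf r θ g s * D1f θ g s)) / Df θ g s ^ 3

variable {K : ℕ}

lemma Ef_pos (θ g : Fin K → ℝ) (s : ℝ) (a : Fin K) : 0 < Ef θ g s a := Real.exp_pos _

lemma Df_pos (hK : 2 ≤ K) (θ g : Fin K → ℝ) (s : ℝ) : 0 < Df θ g s :=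
  Finset.sum_pos (fun a _ => Ef_pos θ g s a) ⟨⟨0, by omega⟩, Finset.mem_univ _⟩

lemma Ef_deriv (θ g : Fin K → ℝ) (s : ℝ) (a : Fin K) :
    HasDerivAt (fun s => Ef θ g s a) (g a * Ef θ g s a) s := by
  have h1 : HasDerivAt (fun s : ℝ => θ a + s * g a) (g a) s := by
    simpa using ((hasDerivAt_mul_const (g a)).const_add (θ a))
  simpa [Ef, mul_comm] using h1.exp

lemma Df_deriv (θ g : Fin K → ℝ) (s : ℝ) : HasDerivAt (Df θ g) (D1f θ g s) s :=
  HasDerivAt.fun_sum (fun a _ => Ef_deriv θ g s a)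

lemma Nf_deriv (r θ g : Fin K → ℝ) (s : ℝ) : HasDerivAt (Nf r θ g) (N1f r θ g s) s :=
  HasDerivAt.fun_sum (fun a _ => (Ef_deriv θ g s a).mul_const (r a))

lemma D1f_deriv (θ g : Fin K → ℝ) (s : ℝ) : HasDerivAt (D1f θ g) (D2f θ g s) s :=
  HasDerivAt.fun_sum (fun a _ => (Ef_deriv θ g s a).const_mul (g a))

lemma N1f_deriv (r θ g : Fin K → ℝ) (s : ℝ) : HasDerivAt (N1f r θ g) (N2f r θ g s) s :=
  HasDerivAt.fun_sum (fun a _ => ((Ef_deriv θ g s a).const_mul (g a)).mul_const (r a))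

lemma phif_deriv (hK : 2 ≤ K) (r θ g : Fin K → ℝ) (s : ℝ) :
    HasDerivAt (phif r θ g) (psif r θ g s) s :=
  (Nf_deriv r θ g s).div (Df_deriv θ g s) (ne_of_gt (Df_pos hK θ g s))

lemma psif_deriv (hK : 2 ≤ K) (r θ g : Fin K → ℝ) (s : ℝ) :
    HasDerivAt (psif r θ g) (Qf r θ g s) s := by
  have hDne : Df θ g s ≠ 0 := ne_of_gt (Df_pos hK θ g s)
  have h := (((N1f_deriv r θ g s).mul (Df_deriv θ g s)).sub
    ((Nf_deriv r θ g s).mul (D1f_deriv θ g s))).div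
    ((Df_deriv θ g s).pow 2) (pow_ne_zero 2 hDne)
  have he : ((N2f r θ g s * Df θ g s + N1f r θ g s * D1f θ g s
      - (N1f r θ g s * D1f θ g s + Nf r θ g s * D2f θ g s)) * Df θ g s ^ 2
      - (N1f r θ g s * Df θ g s - Nf r θ g s * D1f θ g s)
        * ((2 : ℕ) * Df θ g s ^ (2 - 1) * D1f θ g s)) / (Df θ g s ^ 2) ^ 2
      = Qf r θ g s := by
    rw [Qf, div_eq_div_iff (pow_ne_zero _ (pow_ne_zero _ hDne)) (pow_ne_zero _ hDne)]
    push_cast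
    ring
  exact he ▸ h

lemma Nf_pos (hK : 2 ≤ K) (r θ g : Fin K → ℝ) (hr : ∀ a, 0 < r a ∧ r a ≤ 1) (s : ℝ) :
    0 < Nf r θ g s :=
  Finset.sum_pos (fun a _ => mul_pos (Ef_pos θ g s a) (hr a).1) ⟨⟨0, by omega⟩, Finset.mem_univ _⟩

lemma Nf_le_Df (r θ g : Fin K → ℝ) (hr : ∀ a, 0 < r a ∧ r a ≤ 1) (s : ℝ) :
    Nf r θ g s ≤ Df θ g s :=
  Finset.sum_le_sum fun a _ => by nlinarith [(hr a).2, (hr a).1, Ef_pos θ g s a]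

lemma range_bound (hK : 2 ≤ K) (r θ g : Fin K → ℝ) (hr : ∀ a, 0 < r a ∧ r a ≤ 1)
    (s : ℝ) (a : Fin K) : |r a * Df θ g s - Nf r θ g s| ≤ Df θ g s := by
  have h1 := (hr a).1
  have h2 := (hr a).2
  have h3 := Nf_pos hK r θ g hr s
  have h4 := Nf_le_Df r θ g hr s
  have h5 := Df_pos hK θ g s
  rw [abs_le]
  constructor <;> nlinarith

lemma sum2_eq (θ g : Fin K → ℝ) (s : ℝ) :
    ∑ a, Ef θ g s a * (g a * Df θ g s - D1f θ g s) ^ 2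
      = D2f θ g s * Df θ g s ^ 2 - Df θ g s * D1f θ g s ^ 2 := by
  have expand : ∀ a : Fin K, Ef θ g s a * (g a * Df θ g s - D1f θ g s) ^ 2
      = (g a * (g a * Ef θ g s a)) * Df θ g s ^ 2
        - (g a * Ef θ g s a) * (2 * Df θ g s * D1f θ g s)
        + Ef θ g s a * D1f θ g s ^ 2 := fun a => by ring
  rw [Finset.sum_congr rfl fun a _ => expand a]
  rw [Finset.sum_add_distrib, Finset.sum_sub_distrib, ← Finset.sum_mul, ← Finset.sum_mul,
    ← Finset.sum_mul]
  rw [show (∑ a, g a * (g a * Ef θ g s a)) = D2f θ g s from rfl,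
    show (∑ a, g a * Ef θ g s a) = D1f θ g s from rfl,
    show (∑ a, Ef θ g s a) = Df θ g s from rfl]
  ring

lemma D2f_le (θ g : Fin K → ℝ) (s : ℝ) : D2f θ g s ≤ (∑ a, g a ^ 2) * Df θ g s := by
  rw [D2f, Df, Finset.mul_sum]
  apply Finset.sum_le_sum
  intro a _
  have hga : g a ^ 2 ≤ ∑ a, g a ^ 2 :=
    Finset.single_le_sum (f := fun a => g a ^ 2) (fun b _ => sq_nonneg _) (Finset.mem_univ a)
  nlinarith [Ef_pos θ g s a, sq_nonneg (g a)]

lemma P_id (r θ g : Fin K → ℝ) (s : ℝ) :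
    ∑ a, Ef θ g s a * (r a * Df θ g s - Nf r θ g s) * (g a * Df θ g s - D1f θ g s) ^ 2
      = ((N2f r θ g s * Df θ g s - Nf r θ g s * D2f θ g s) * Df θ g s
        - 2 * D1f θ g s * (N1f r θ g s * Df θ g s - Nf r θ g s * D1f θ g s)) * Df θ g s := by
  have expand : ∀ a : Fin K,
      Ef θ g s a * (r a * Df θ g s - Nf r θ g s) * (g a * Df θ g s - D1f θ g s) ^ 2
      = (g a * (g a * Ef θ g s a) * r a) * Df θ g s ^ 3
        - (g a * Ef θ g s a * r a) * (2 * D1f θ g s * Df θ g s ^ 2)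
        + (Ef θ g s a * r a) * (Df θ g s * D1f θ g s ^ 2)
        - (g a * (g a * Ef θ g s a)) * (Nf r θ g s * Df θ g s ^ 2)
        + (g a * Ef θ g s a) * (2 * Nf r θ g s * Df θ g s * D1f θ g s)
        - Ef θ g s a * (Nf r θ g s * D1f θ g s ^ 2) := fun a => by ring
  rw [Finset.sum_congr rfl fun a _ => expand a]
  rw [Finset.sum_sub_distrib, Finset.sum_add_distrib, Finset.sum_sub_distrib,
    Finset.sum_add_distrib, Finset.sum_sub_distrib,
    ← Finset.sum_mul, ← Finset.sum_mul, ← Finset.sum_mul, ← Finset.sum_mul,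
    ← Finset.sum_mul, ← Finset.sum_mul]
  rw [show (∑ a, g a * (g a * Ef θ g s a) * r a) = N2f r θ g s from rfl,
    show (∑ a, g a * Ef θ g s a * r a) = N1f r θ g s from rfl,
    show (∑ a, Ef θ g s a * r a) = Nf r θ g s from rfl,
    show (∑ a, g a * (g a * Ef θ g s a)) = D2f θ g s from rfl,
    show (∑ a, g a * Ef θ g s a) = D1f θ g s from rfl,
    show (∑ a, Ef θ g s a) = Df θ g s from rfl]
  ring

lemma Qf_bound (hK : 2 ≤ K) (r θ g : Fin K → ℝ) (hr : ∀ a, 0 < r a ∧ r a ≤ 1) (s : ℝ) :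
    |Qf r θ g s| ≤ ∑ a, g a ^ 2 := by
  have hDp := Df_pos hK θ g s
  have hG2nn : 0 ≤ ∑ a, g a ^ 2 := Finset.sum_nonneg fun a _ => sq_nonneg _
  have hP : |∑ a, Ef θ g s a * (r a * Df θ g s - Nf r θ g s)
      * (g a * Df θ g s - D1f θ g s) ^ 2| ≤ (∑ a, g a ^ 2) * Df θ g s ^ 4 := by
    calc |∑ a, Ef θ g s a * (r a * Df θ g s - Nf r θ g s) * (g a * Df θ g s - D1f θ g s) ^ 2|
        ≤ ∑ a, |Ef θ g s a * (r a * Df θ g s - Nf r θ g s) * (g a * Df θ g s - D1f θ g s) ^ 2| :=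
          Finset.abs_sum_le_sum_abs _ _
      _ ≤ ∑ a, Ef θ g s a * Df θ g s * (g a * Df θ g s - D1f θ g s) ^ 2 := by
          apply Finset.sum_le_sum
          intro a _
          rw [abs_mul, abs_mul, abs_of_pos (Ef_pos θ g s a),
            abs_of_nonneg (sq_nonneg (g a * Df θ g s - D1f θ g s))]
          exact mul_le_mul_of_nonneg_right
            (mul_le_mul_of_nonneg_left (range_bound hK r θ g hr s a) (Ef_pos θ g s a).le)
            (sq_nonneg (g a * Df θ g s - D1f θ g s))
      _ = Df θ g s * ∑ a, Ef θ g s a * (g a * Df θ g s - D1f θ g s) ^ 2 := by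
          rw [Finset.mul_sum]; exact Finset.sum_congr rfl fun a _ => by ring
      _ = Df θ g s * (D2f θ g s * Df θ g s ^ 2 - Df θ g s * D1f θ g s ^ 2) := by
          rw [sum2_eq]
      _ ≤ Df θ g s * (D2f θ g s * Df θ g s ^ 2) := by
          nlinarith [sq_nonneg (D1f θ g s)]
      _ ≤ Df θ g s * (((∑ a, g a ^ 2) * Df θ g s) * Df θ g s ^ 2) := by
          nlinarith [mul_le_mul_of_nonneg_right
            (mul_le_mul_of_nonneg_left (D2f_le θ g s) hDp.le) (sq_nonneg (Df θ g s))]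
      _ = (∑ a, g a ^ 2) * Df θ g s ^ 4 := by ring
  rw [P_id] at hP
  rw [Qf, abs_div, abs_of_pos (show (0:ℝ) < Df θ g s ^ 3 by positivity),
    div_le_iff₀ (by positivity)]
  rw [abs_mul, abs_of_pos hDp] at hP
  nlinarith [abs_nonneg ((N2f r θ g s * Df θ g s - Nf r θ g s * D2f θ g s) * Df θ g s
    - 2 * D1f θ g s * (N1f r θ g s * Df θ g s - Nf r θ g s * D1f θ g s))]

lemma Ef_zero (θ g : Fin K → ℝ) (a : Fin K) : Ef θ g 0 a = Real.exp (θ a) := by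
  rw [Ef]; norm_num

lemma Df_zero (θ g : Fin K → ℝ) : Df θ g 0 = ∑ a, Real.exp (θ a) :=
  Finset.sum_congr rfl fun a _ => Ef_zero θ g a

lemma expReward_Df (hK : 2 ≤ K) (r θ g : Fin K → ℝ) :
    expReward r θ * Df θ g 0 = Nf r θ g 0 := by
  rw [Df_zero, Nf]
  unfold expReward softmax
  rw [Finset.sum_mul]
  apply Finset.sum_congr rfl
  intro a _
  rw [Ef_zero]
  rw [div_mul_eq_mul_div, mul_comm, ← mul_div_assoc, mul_comm,
    mul_div_assoc, div_self (ne_of_gt (sum_exp_pos hK θ)), mul_one]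

lemma pgrad_Df (hK : 2 ≤ K) (r θ : Fin K → ℝ) (a : Fin K) :
    pgrad r θ a * Df θ (pgrad r θ) 0 = Ef θ (pgrad r θ) 0 a * (r a - expReward r θ) := by
  rw [Ef_zero, Df_zero]
  unfold pgrad softmax
  have hS := ne_of_gt (sum_exp_pos hK θ)
  field_simp

lemma psif_zero (hK : 2 ≤ K) (r θ : Fin K → ℝ) :
    psif r θ (pgrad r θ) 0 = ∑ a, pgrad r θ a ^ 2 := by
  set g := pgrad r θ with hg
  have hDne : Df θ g 0 ≠ 0 := ne_of_gt (Df_pos hK θ g 0)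
  have hkey : N1f r θ g 0 * Df θ g 0 - Nf r θ g 0 * D1f θ g 0
      = (∑ a, g a ^ 2) * Df θ g 0 ^ 2 := by
    have h1 : N1f r θ g 0 * Df θ g 0 - Nf r θ g 0 * D1f θ g 0
        = ∑ a, (g a * Ef θ g 0 a * r a * Df θ g 0 - g a * Ef θ g 0 a * Nf r θ g 0) := by
      rw [N1f, D1f, Finset.sum_mul, Finset.mul_sum, ← Finset.sum_sub_distrib]
      exact Finset.sum_congr rfl fun a _ => by ring
    have h2 : ∀ a : Fin K, g a * Ef θ g 0 a * r a * Df θ g 0 - g a * Ef θ g 0 a * Nf r θ g 0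
        = (g a ^ 2 * Df θ g 0) * Df θ g 0 := by
      intro a
      calc g a * Ef θ g 0 a * r a * Df θ g 0 - g a * Ef θ g 0 a * Nf r θ g 0
          = g a * (Ef θ g 0 a * (r a - expReward r θ)) * Df θ g 0 := by
            rw [← expReward_Df hK r θ g]; ring
        _ = g a * (g a * Df θ g 0) * Df θ g 0 := by rw [← pgrad_Df hK r θ a]
        _ = (g a ^ 2 * Df θ g 0) * Df θ g 0 := by ring
    rw [h1, Finset.sum_congr rfl fun a _ => h2 a, ← Finset.sum_mul, ← Finset.sum_mul]
    ring
  rw [psif, hkey, sq, mul_div_assoc, div_self (mul_ne_zero hDne hDne), mul_one]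

lemma phif_eq (hK : 2 ≤ K) (r θ g : Fin K → ℝ) (s : ℝ) :
    phif r θ g s = expReward r (fun a => θ a + s * g a) := by
  have hDne : Df θ g s ≠ 0 := ne_of_gt (Df_pos hK θ g s)
  rw [phif, Nf, eq_comm]
  unfold expReward softmax
  rw [eq_div_iff hDne, Finset.sum_mul]
  apply Finset.sum_congr rfl
  intro a _
  have h1 : (∑ a', Real.exp (θ a' + s * g a')) = Df θ g s := rfl
  have h2 : Ef θ g s a = Real.exp (θ a + s * g a) := rfl
  rw [h1, h2]
  field_simp

lemma phif_zero (hK : 2 ≤ K) (r θ g : Fin K → ℝ) : phif r θ g 0 = expReward r θ := by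
  rw [phif, eq_comm, eq_div_iff (ne_of_gt (Df_pos hK θ g 0)), expReward_Df hK r θ g]

lemma smooth_step (hK : 2 ≤ K) (r : Fin K → ℝ) (hr : ∀ a, 0 < r a ∧ r a ≤ 1)
    (θ : Fin K → ℝ) (η : ℝ) (hη : 0 ≤ η) :
    expReward r (fun a => θ a + η * pgrad r θ a)
      ≤ expReward r θ + η * (∑ a, pgrad r θ a ^ 2)
        + η ^ 2 * ((∑ a, pgrad r θ a ^ 2) / 2) := by
  set g := pgrad r θ with hg
  set G2 : ℝ := ∑ a, g a ^ 2 with hG2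
  have hG2nn : 0 ≤ G2 := Finset.sum_nonneg fun a _ => sq_nonneg _
  have hψle : ∀ s : ℝ, 0 ≤ s → psif r θ g s ≤ G2 + s * G2 := by
    intro s hs
    have hlip : ‖psif r θ g s - psif r θ g 0‖ ≤ G2 * ‖s - 0‖ := by
      apply Convex.norm_image_sub_le_of_norm_hasDerivWithin_le
        (fun x _ => (psif_deriv hK r θ g x).hasDerivWithinAt) (fun x _ => ?_) convex_univ
        (Set.mem_univ 0) (Set.mem_univ s)
      rw [Real.norm_eq_abs]
      exact Qf_bound hK r θ g hr x
    rw [Real.norm_eq_abs, Real.norm_eq_abs, psif_zero hK r θ, ← hG2, sub_zero,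
      abs_of_nonneg hs] at hlip
    have := (abs_le.mp hlip).2
    linarith
  set χ : ℝ → ℝ := fun s => phif r θ g 0 + s * G2 + s ^ 2 * (G2 / 2) - phif r θ g s with hχ
  have hχderiv : ∀ s, HasDerivAt χ (G2 + s * G2 - psif r θ g s) s := by
    intro s
    have h1 : HasDerivAt (fun s : ℝ => phif r θ g 0 + s * G2 + s ^ 2 * (G2 / 2))
        (G2 + (2 : ℕ) * s ^ (2 - 1) * (G2 / 2)) s :=
      ((hasDerivAt_mul_const G2).const_add (phif r θ g 0)).add
        ((hasDerivAt_pow 2 s).mul_const (G2 / 2))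
    have h2 := h1.sub (phif_deriv hK r θ g s)
    have he : G2 + (2 : ℕ) * s ^ (2 - 1) * (G2 / 2) - psif r θ g s
        = G2 + s * G2 - psif r θ g s := by push_cast; ring
    rw [hχ]
    exact he ▸ h2
  have hχmono : MonotoneOn χ (Set.Ici (0:ℝ)) := by
    apply monotoneOn_of_deriv_nonneg (convex_Ici 0)
    · exact (Differentiable.continuous fun s => (hχderiv s).differentiableAt).continuousOn
    · intro x _
      exact ((hχderiv x).differentiableAt).differentiableWithinAt
    · intro x hx
      rw [interior_Ici] at hx
      rw [(hχderiv x).deriv]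
      have := hψle x (le_of_lt hx)
      linarith
  have hχ0 : χ 0 = 0 := by rw [hχ]; ring_nf
  have hfin : χ 0 ≤ χ η := hχmono (Set.mem_Ici.mpr le_rfl) (Set.mem_Ici.mpr hη) hη
  rw [hχ0, hχ] at hfin
  have h1 := phif_eq hK r θ g η
  have h2 := phif_zero hK r θ g
  simp only [h1, h2] at hfin
  rw [hg] at hfin ⊢
  linarith

end SPG

lemma seq_lower (c : ℝ) (hc : 0 < c) (d : ℕ → ℝ) (hpos : ∀ t, 0 < d t)
    (hstep : ∀ t, d t - c * d t ^ 2 ≤ d (t + 1))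
    (hconv : Tendsto d atTop (nhds 0)) :
    ∃ T : ℕ, ∀ t ≥ T, 1 / (2 * c * ((t : ℝ) + 1)) ≤ d t := by
  set e : ℝ := 1 / (2 * c) with he
  have hce : c * e = 1 / 2 := by rw [he]; field_simp
  have he0 : 0 < e := by positivity
  have hev : ∀ᶠ t in atTop, d t < e := hconv.eventually_lt_const he0
  obtain ⟨T0, hT0⟩ := eventually_atTop.mp hev
  set T1 : ℕ := max T0 1 with hT1
  set u : ℕ → ℝ := fun t => ((t : ℝ) + 1) * d t with hu
  have hkeep : ∀ t, T0 ≤ t → e ≤ u t → e ≤ u (t + 1) := by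
    intro t ht hue
    have h1 : d t < e := hT0 t ht
    have h2 := hstep t
    have h3 := hpos t
    have h4 : c * d t ≤ 1 / 2 := by nlinarith
    have h5 : (0:ℝ) ≤ (t:ℝ) := Nat.cast_nonneg t
    have hue' : e ≤ ((t:ℝ) + 1) * d t := hue
    have hgoal : e ≤ ((t:ℝ) + 1 + 1) * d (t + 1) := by
      nlinarith [mul_nonneg (sub_nonneg.mpr hue') (by linarith : (0:ℝ) ≤ 1 - c * d t),
        mul_nonneg h3.le (by linarith : (0:ℝ) ≤ 1 / 2 - c * d t)]
    have : u (t + 1) = ((t:ℝ) + 1 + 1) * d (t + 1) := by rw [hu]; push_cast; ring_nf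
    rw [this]; exact hgoal
  have hgrow : ∀ t, T1 ≤ t → u t < e → u t + d t / 4 ≤ u (t + 1) := by
    intro t ht hue
    have h2 := hstep t
    have h3 := hpos t
    have h5 : (1:ℝ) ≤ (t:ℝ) := by
      have : 1 ≤ t := le_trans (le_max_right T0 1) ht
      exact_mod_cast this
    have hue' : ((t:ℝ) + 1) * d t < e := hue
    have h6 : c * ((t : ℝ) + 1) * d t < 1 / 2 := by
      have := mul_lt_mul_of_pos_left hue' hc
      nlinarith
    have h7 : c * d t * ((t : ℝ) + 2) ≤ 3 / 4 := by nlinarith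
    have hgoal : ((t:ℝ) + 1) * d t + d t / 4 ≤ ((t:ℝ) + 1 + 1) * d (t + 1) := by
      nlinarith [mul_nonneg h3.le (by linarith : (0:ℝ) ≤ 3 / 4 - c * d t * ((t:ℝ) + 2))]
    have : u (t + 1) = ((t:ℝ) + 1 + 1) * d (t + 1) := by rw [hu]; push_cast; ring_nf
    rw [this]; exact hgoal
  have hexists : ∃ T2, T1 ≤ T2 ∧ e ≤ u T2 := by
    by_contra hcon
    push_neg at hcon
    have hub : ∀ t, T1 ≤ t → u t < e := fun t ht => hcon t ht
    set m : ℝ := u T1 with hm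
    have hm0 : 0 < m := mul_pos (by positivity) (hpos T1)
    set H : ℕ → ℝ := fun n => ∑ i ∈ Finset.range n, (1:ℝ) / (i + 1) with hH
    have hind : ∀ n : ℕ, m + m / 4 * (H (T1 + n) - H T1) ≤ u (T1 + n) := by
      intro n
      induction n with
      | zero => simp; exact le_of_eq hm
      | succ n ih =>
        have hsum : (0:ℝ) ≤ H (T1 + n) - H T1 := by
          have hsub : (Finset.range T1) ⊆ Finset.range (T1 + n) :=
            Finset.range_subset_range.mpr (by omega)
          have := Finset.sum_le_sum_of_subset_of_nonneg
            (f := fun i : ℕ => (1:ℝ) / (i + 1)) hsub (fun i _ _ => by positivity)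
          simpa [hH] using sub_nonneg.mpr this
        have hmle : m ≤ u (T1 + n) := by nlinarith
        have hlt : u (T1 + n) < e := hub _ (by omega)
        have hg := hgrow (T1 + n) (by omega) hlt
        have hd : m / (((T1 + n : ℕ) : ℝ) + 1) ≤ d (T1 + n) := by
          rw [div_le_iff₀ (by positivity)]
          have huval : u (T1 + n) = (((T1 + n : ℕ) : ℝ) + 1) * d (T1 + n) := rfl
          nlinarith [hmle]
        have hHstep : H (T1 + n + 1) = H (T1 + n) + 1 / (((T1 + n : ℕ) : ℝ) + 1) := by
          rw [hH]
          simp only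
          rw [Finset.sum_range_succ]
        have hd4 : m / 4 * (1 / (((T1 + n : ℕ) : ℝ) + 1)) ≤ d (T1 + n) / 4 := by
          have heq : m / 4 * (1 / (((T1 + n : ℕ) : ℝ) + 1))
              = (m / (((T1 + n : ℕ) : ℝ) + 1)) / 4 := by ring
          rw [heq]
          linarith
        have hfin : T1 + (n + 1) = (T1 + n) + 1 := by omega
        rw [hfin, hHstep]
        calc m + m / 4 * (H (T1 + n) + 1 / (((T1 + n : ℕ) : ℝ) + 1) - H T1)
            = (m + m / 4 * (H (T1 + n) - H T1)) + m / 4 * (1 / (((T1 + n : ℕ) : ℝ) + 1)) := by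
              ring
          _ ≤ u (T1 + n) + d (T1 + n) / 4 := by linarith
          _ ≤ u (T1 + n + 1) := hg
    have hHtend : Tendsto H atTop atTop := by
      rw [hH]
      exact Real.tendsto_sum_range_one_div_nat_succ_atTop
    obtain ⟨M, hM⟩ := (hHtend.eventually_ge_atTop (H T1 + 4 * e / m)).exists_forall_of_atTop
    have hHM : H T1 + 4 * e / m ≤ H (T1 + M) := hM (T1 + M) (by omega)
    have h1 := hind M
    have h2 : u (T1 + M) < e := hub _ (by omega)
    have : m + m / 4 * (4 * e / m) ≤ u (T1 + M) := by
      have : m / 4 * (H (T1 + M) - H T1) ≥ m / 4 * (4 * e / m) := by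
        apply mul_le_mul_of_nonneg_left _ (by positivity)
        linarith
      linarith
    have hme : m / 4 * (4 * e / m) = e := by field_simp
    nlinarith
  obtain ⟨T2, hT2a, hT2b⟩ := hexists
  refine ⟨T2, ?_⟩
  have hall : ∀ t, T2 ≤ t → e ≤ u t := by
    intro t ht
    induction t with
    | zero =>
      have : T2 = 0 := by omega
      rw [← this]; exact hT2b
    | succ n ih =>
      rcases Nat.lt_or_ge T2 (n + 1) with h | h
      · have hn : T2 ≤ n := by omega
        exact hkeep n (by omega) (ih hn)
      · have : T2 = n + 1 := by omega
        rw [← this]; exact hT2b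
  intro t ht
  have := hall t ht
  have hue : e ≤ ((t:ℝ) + 1) * d t := this
  rw [he] at hue
  rw [div_le_iff₀ (by positivity)]
  have h2c : (0:ℝ) < 2 * c := by positivity
  rw [div_le_iff₀ h2c] at hue
  nlinarith

/-- Softmax PG lower bound with exact gradients: if the sub-optimality converges to
zero then, for all sufficiently large `t`, `(π* − π_{θ_t})ᵀ r ≥ Δ²/(6·t)`.
Here `θ 0` is the paper's `θ_1`, so the paper's `θ_t` is `θ (t-1)` and the
bound `Δ²/(6·t)` becomes `Δ²/(6·(t+1))`. -/
theorem softmax_pg_true_gradient_lower_bound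
    {K : ℕ} (hK : 2 ≤ K) (r : Fin K → ℝ)
    (hr : ∀ a, 0 < r a ∧ r a ≤ 1)
    (astar : Fin K) (hstar : ∀ a, a ≠ astar → r a < r astar)
    (Δ : ℝ) (hΔ : Δ = r astar - sSup (r '' {a | a ≠ astar}))
    (η : ℝ) (hη : 0 < η) (hη1 : η ≤ 1)
    (θ : ℕ → Fin K → ℝ)
    (hupd : ∀ t, θ (t + 1) = fun a => θ t a + η * pgrad r (θ t) a)
    (hconv : Tendsto (fun t => r astar - expReward r (θ t)) atTop (nhds 0)) :
    ∃ T : ℕ, ∀ t ≥ T, Δ ^ 2 / (6 * ((t : ℝ) + 1)) ≤ r astar - expReward r (θ t) := by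
  obtain ⟨hΔ0, hΔ1, hgap⟩ := delta_facts hK r hr astar hstar Δ hΔ
  have hΔne : Δ ≠ 0 := ne_of_gt hΔ0
  set d : ℕ → ℝ := fun t => r astar - expReward r (θ t) with hd
  have hpos : ∀ t, 0 < d t := fun t => subopt_pos hK r hr astar hstar (θ t)
  have hstep : ∀ t, d t - (3 / Δ ^ 2) * d t ^ 2 ≤ d (t + 1) := by
    intro t
    have hs := SPG.smooth_step hK r hr (θ t) η (le_of_lt hη)
    rw [← hupd t] at hs
    have hG2nn : (0:ℝ) ≤ ∑ a, pgrad r (θ t) a ^ 2 :=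
      Finset.sum_nonneg fun a _ => sq_nonneg _
    have hG2 : (∑ a, pgrad r (θ t) a ^ 2) * Δ ^ 2
        ≤ 2 * (r astar - expReward r (θ t)) ^ 2 :=
      grad_sq_le hK r hr astar Δ hgap hΔ0 hΔ1 (θ t)
    have hη2 : η ^ 2 ≤ 1 := by nlinarith
    have hbound : expReward r (θ (t + 1)) ≤ expReward r (θ t)
        + (3 / 2) * (∑ a, pgrad r (θ t) a ^ 2) := by nlinarith
    have key : expReward r (θ (t + 1)) - expReward r (θ t)
        ≤ 3 / Δ ^ 2 * (r astar - expReward r (θ t)) ^ 2 := by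
      rw [div_mul_eq_mul_div, le_div_iff₀ (by positivity)]
      have h4 : (expReward r (θ (t + 1)) - expReward r (θ t)) * Δ ^ 2
          ≤ (3 / 2 * (∑ a, pgrad r (θ t) a ^ 2)) * Δ ^ 2 :=
        mul_le_mul_of_nonneg_right (by linarith) (sq_nonneg Δ)
      linarith
    simp only [hd]
    linarith
  have hc : (0:ℝ) < 3 / Δ ^ 2 := by positivity
  obtain ⟨T, hT⟩ := seq_lower (3 / Δ ^ 2) hc d hpos hstep hconv
  refine ⟨T, fun t ht => ?_⟩
  have := hT t ht
  have heq : 1 / (2 * (3 / Δ ^ 2) * ((t : ℝ) + 1)) = Δ ^ 2 / (6 * ((t : ℝ) + 1)) := by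
    have ht1 : ((t:ℝ) + 1) ≠ 0 := by positivity
    have hΔne' : (Δ:ℝ) ^ 2 ≠ 0 := pow_ne_zero 2 hΔne
    have hΔne'' : (Δ:ℝ) ^ 2 ≠ 0 := hΔne'
    have h1 : 2 * (3 / Δ ^ 2) * ((t:ℝ) + 1) = 6 * ((t:ℝ) + 1) / Δ ^ 2 := by
      rw [eq_div_iff hΔne']
      field_simp
      norm_num
    rw [h1, one_div_div]
  rw [heq] at this
  exact this
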